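/- Let 1 ≤ P, Q, R < ∞ and 1 ≤ p, q, r ≤ ∞ with 1/P = 1/R + 1/Q and 1/p = 1/r + 1/q. Then for all measurable functions f, g on ℝⁿ, the Lorentz quasinorms satisfy ‖f·g‖_{L^{P,p}} ≤ ‖f‖_{L^{R,r}}·‖g‖_{L^{Q,q}}. -/

import Mathlib

open MeasureTheory Set Filter
open scoped ENNReal

noncomputable section

/-- Decreasing rearrangement of an `ℝ≥0∞`-valued function. -/
noncomputable def rearrE {α : Type*} [MeasurableSpace α] (μ : MeasureTheory.Measure α)
    (u : α → ENNReal) (t : ℝ) : ENNReal :=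
  sInf {s : ENNReal | μ {x | s < u x} ≤ ENNReal.ofReal t}

/-- Decreasing rearrangement of a real-valued function (with `inf ∅ = ∞`). -/
noncomputable def rearr {α : Type*} [MeasurableSpace α] (μ : MeasureTheory.Measure α)
    (u : α → ℝ) (t : ℝ) : ENNReal :=
  rearrE μ (fun x => ENNReal.ofReal |u x|) t
/-- The Lorentz quasinorm `‖u‖_{L^{P,p}}` with first exponent `P : ℝ` and second
exponent `p : ℝ≥0∞` (the case `p = ∞` being the weak-type norm, with `1/∞ = 0`). -/
noncomputable def lorentzNorm {α : Type*} [MeasurableSpace α] (μ : MeasureTheory.Measure α)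
    (P : ℝ) (p : ENNReal) (u : α → ℝ) : ENNReal :=
  if p = ⊤ then ⨆ t ∈ Set.Ioi (0:ℝ), ENNReal.ofReal (t ^ (1/P)) * rearr μ u t
  else (∫⁻ t in Set.Ioi (0:ℝ),
      (ENNReal.ofReal (t ^ (1/P - 1/p.toReal)) * rearr μ u t) ^ p.toReal) ^ (1/p.toReal)

variable {α : Type*} [MeasurableSpace α] {μ : MeasureTheory.Measure α}

lemma rearrE_set_nonempty (u : α → ENNReal) (t : ℝ) :
    {s : ENNReal | μ {x | s < u x} ≤ ENNReal.ofReal t}.Nonempty := by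
  refine ⟨⊤, ?_⟩
  have : {x | (⊤:ENNReal) < u x} = ∅ := by
    ext x; simp [not_top_lt]
  simp [this]

lemma rearrE_mem (u : α → ENNReal) (t : ℝ) :
    μ {x | rearrE μ u t < u x} ≤ ENNReal.ofReal t := by
  set A := {s : ENNReal | μ {x | s < u x} ≤ ENNReal.ofReal t} with hA
  set m := sInf A with hm
  rcases eq_or_ne m ⊤ with h | h
  · have : {x | m < u x} = ∅ := by
      ext x; simp [h, not_top_lt]
    simp [rearrE, ← hA, ← hm, this]
  · have key : ∀ n : ℕ, μ {x | m + (n:ENNReal)⁻¹ < u x} ≤ ENNReal.ofReal t := by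
      intro n
      have hlt : m < m + (n:ENNReal)⁻¹ :=
        ENNReal.lt_add_right h (by simp [ENNReal.inv_ne_zero])
      obtain ⟨a, haA, ha⟩ := sInf_lt_iff.mp hlt
      refine le_trans (measure_mono ?_) haA
      intro x hx
      exact lt_of_le_of_lt ha.le hx
    have hsub : {x | m < u x} ⊆ ⋃ n : ℕ, {x | m + (n:ENNReal)⁻¹ < u x} := by
      intro x hx
      obtain ⟨k, hk⟩ := ENNReal.exists_inv_nat_lt (a := u x - m) (by
        simp only [ne_eq, tsub_eq_zero_iff_le, not_le]; exact hx)
      refine mem_iUnion.mpr ⟨k, ?_⟩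
      have : m + (k:ENNReal)⁻¹ < m + (u x - m) := ENNReal.add_lt_add_left h hk
      rwa [add_tsub_cancel_of_le hx.le] at this
    have hmono : Monotone (fun n : ℕ => {x | m + (n:ENNReal)⁻¹ < u x}) := by
      intro a b hab x hx
      have hba : (b:ENNReal)⁻¹ ≤ (a:ENNReal)⁻¹ :=
        ENNReal.inv_le_inv.mpr (by exact_mod_cast hab)
      exact lt_of_le_of_lt (add_le_add (le_refl m) hba) hx
    calc μ {x | m < u x} ≤ μ (⋃ n : ℕ, {x | m + (n:ENNReal)⁻¹ < u x}) := measure_mono hsub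
      _ = ⨆ n : ℕ, μ {x | m + (n:ENNReal)⁻¹ < u x} := (hmono.directed_le).measure_iUnion
      _ ≤ ENNReal.ofReal t := iSup_le key

lemma rearrE_antitone (u : α → ENNReal) : Antitone (rearrE μ u) := by
  intro s t h
  exact sInf_le_sInf (fun a ha => le_trans ha (ENNReal.ofReal_le_ofReal h))

lemma rearr_antitone (f : α → ℝ) : Antitone (rearr μ f) := rearrE_antitone _

lemma rearrE_mul_le (u v : α → ENNReal) {s t : ℝ} (hs : 0 ≤ s) (ht : 0 ≤ t) :
    rearrE μ (fun x => u x * v x) (s + t) ≤ rearrE μ u s * rearrE μ v t := by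
  apply sInf_le
  show μ {x | rearrE μ u s * rearrE μ v t < u x * v x} ≤ ENNReal.ofReal (s + t)
  calc μ {x | rearrE μ u s * rearrE μ v t < u x * v x}
      ≤ μ ({x | rearrE μ u s < u x} ∪ {x | rearrE μ v t < v x}) := by
        apply measure_mono
        intro x hx
        by_contra hc
        simp only [mem_union, mem_setOf_eq, not_or, not_lt] at hc
        exact absurd (mul_le_mul' hc.1 hc.2) (not_le.mpr hx)
    _ ≤ μ {x | rearrE μ u s < u x} + μ {x | rearrE μ v t < v x} := measure_union_le _ _
    _ ≤ ENNReal.ofReal s + ENNReal.ofReal t := add_le_add (rearrE_mem u s) (rearrE_mem v t)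
    _ = ENNReal.ofReal (s + t) := (ENNReal.ofReal_add hs ht).symm

lemma rearr_mul_le (f g : α → ℝ) {t : ℝ} (ht : 0 ≤ t) :
    rearr μ (fun x => f x * g x) t ≤ rearr μ f (t/2) * rearr μ g (t/2) := by
  have h1 : (fun x => ENNReal.ofReal |f x * g x|) =
      fun x => ENNReal.ofReal |f x| * ENNReal.ofReal |g x| := by
    funext x
    rw [abs_mul, ENNReal.ofReal_mul (abs_nonneg _)]
  have h2 : rearr μ (fun x => f x * g x) t =
      rearrE μ (fun x => ENNReal.ofReal |f x| * ENNReal.ofReal |g x|) (t/2 + t/2) := by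
    rw [rearr, h1]
    norm_num
  rw [h2]
  exact rearrE_mul_le (μ := μ) _ _ (by linarith) (by linarith)

lemma rearr_measurable (f : α → ℝ) : Measurable (rearr μ f) :=
  Antitone.measurable (rearr_antitone (μ := μ) f)

lemma rearr_half_measurable (f : α → ℝ) : Measurable (fun t => rearr μ f (t/2)) :=
  Antitone.measurable (fun a b hab => rearr_antitone (μ := μ) f (by linarith : a/2 ≤ b/2))

lemma lintegral_Ioi_half (H : ℝ → ℝ≥0∞) (hH : Measurable H) :
    ∫⁻ t in Ioi (0:ℝ), H (t/2) = 2 * ∫⁻ s in Ioi (0:ℝ), H s := by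
  have hG : Measurable ((Ioi (0:ℝ)).indicator H) := hH.indicator measurableSet_Ioi
  have key : ∀ t : ℝ, (Ioi (0:ℝ)).indicator (fun u => H (u/2)) t
      = (Ioi (0:ℝ)).indicator H ((2:ℝ)⁻¹ * t) := by
    intro t
    rcases lt_or_ge 0 t with ht | ht
    · rw [indicator_of_mem (mem_Ioi.mpr ht), indicator_of_mem (mem_Ioi.mpr (by positivity))]
      norm_num [div_eq_inv_mul]
    · rw [indicator_of_notMem (by simpa using not_lt.mpr ht), indicator_of_notMem]
      rw [mem_Ioi]
      intro h
      nlinarith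
  calc ∫⁻ t in Ioi (0:ℝ), H (t/2)
      = ∫⁻ t, (Ioi (0:ℝ)).indicator (fun u => H (u/2)) t :=
        (lintegral_indicator measurableSet_Ioi _).symm
    _ = ∫⁻ t, (Ioi (0:ℝ)).indicator H ((2:ℝ)⁻¹ * t) := by simp_rw [key]
    _ = ∫⁻ y, (Ioi (0:ℝ)).indicator H y ∂(Measure.map (((2:ℝ)⁻¹) * ·) volume) :=
        (lintegral_map hG (measurable_id.const_mul _)).symm
    _ = 2 * ∫⁻ s in Ioi (0:ℝ), H s := by
        rw [Real.map_volume_mul_left (by norm_num : ((2:ℝ)⁻¹) ≠ 0), lintegral_smul_measure,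
          lintegral_indicator measurableSet_Ioi]
        norm_num

lemma lint_half (h : ℝ → ℝ≥0∞) (hh : Measurable h) (c e : ℝ) (he : 0 ≤ e) :
    ∫⁻ t in Ioi (0:ℝ), (ENNReal.ofReal (t^c) * h (t/2))^e
      = 2 * (ENNReal.ofReal ((2:ℝ)^c))^e *
        ∫⁻ s in Ioi (0:ℝ), (ENNReal.ofReal (s^c) * h s)^e := by
  have hH : Measurable fun s => (ENNReal.ofReal ((2*s)^c) * h s)^e :=
    ((((measurable_id.const_mul (2:ℝ)).pow_const c).ennreal_ofReal.mul hh).pow_const e)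
  have h1 : ∫⁻ t in Ioi (0:ℝ), (ENNReal.ofReal (t^c) * h (t/2))^e
      = ∫⁻ t in Ioi (0:ℝ), (fun s => (ENNReal.ofReal ((2*s)^c) * h s)^e) (t/2) := by
    apply setLIntegral_congr_fun measurableSet_Ioi
    intro t ht
    dsimp only
    have h2 : 2 * (t/2) = t := by ring
    rw [h2]
  rw [h1, lintegral_Ioi_half _ hH]
  have h3 : ∫⁻ s in Ioi (0:ℝ), (ENNReal.ofReal ((2*s)^c) * h s)^e
      = ∫⁻ s in Ioi (0:ℝ), (ENNReal.ofReal ((2:ℝ)^c))^e * (ENNReal.ofReal (s^c) * h s)^e := by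
    apply setLIntegral_congr_fun measurableSet_Ioi
    intro s hs
    dsimp only
    rw [Real.mul_rpow (by norm_num) (le_of_lt hs),
      ENNReal.ofReal_mul (Real.rpow_nonneg (by norm_num) _), mul_assoc,
      ENNReal.mul_rpow_of_nonneg _ _ he]
  rw [h3, lintegral_const_mul' _ _ (by
    exact ENNReal.rpow_ne_top_of_nonneg he ENNReal.ofReal_ne_top), ← mul_assoc]

lemma le_lorentzNorm_top {α : Type*} [MeasurableSpace α] (μ : MeasureTheory.Measure α)
    (R : ℝ) (u : α → ℝ) {t : ℝ} (ht : (0:ℝ) < t) :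
    ENNReal.ofReal (t ^ (1/R)) * rearr μ u t ≤ lorentzNorm μ R ⊤ u := by
  rw [lorentzNorm, if_pos rfl]
  exact le_iSup₂ (f := fun (t : ℝ) (_ : t ∈ Ioi (0:ℝ)) => ENNReal.ofReal (t ^ (1/R)) * rearr μ u t)
    t (mem_Ioi.mpr ht)

lemma lorentzNorm_finite_pow {α : Type*} [MeasurableSpace α] (μ : MeasureTheory.Measure α)
    (P : ℝ) {p : ENNReal} (hp : p ≠ ⊤) (hp0 : p ≠ 0) (u : α → ℝ) :
    (lorentzNorm μ P p u) ^ p.toReal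
      = ∫⁻ t in Ioi (0:ℝ), (ENNReal.ofReal (t ^ (1/P - 1/p.toReal)) * rearr μ u t) ^ p.toReal := by
  rw [lorentzNorm, if_neg hp, ← ENNReal.rpow_mul,
    one_div_mul_cancel (ENNReal.toReal_ne_zero.mpr ⟨hp0, hp⟩), ENNReal.rpow_one]

lemma holder_alg (C1 C2 X Y : ℝ≥0∞) {pr rr qr : ℝ} (hpr : 0 < pr) (hrr : 0 < rr)
    (hqr : 0 < qr) :
    (2 * C1^rr * X^rr)^(1/(rr/pr)) * (2 * C2^qr * Y^qr)^(1/(qr/pr))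
      = ((2:ℝ≥0∞)^(1/rr) * C1 * ((2:ℝ≥0∞)^(1/qr) * C2) * X * Y)^pr := by
  have h1 : rr * (pr/rr) = pr := by field_simp
  have h2 : qr * (pr/qr) = pr := by field_simp
  have h3 : (1/rr) * pr = pr/rr := by ring
  have h4 : (1/qr) * pr = pr/qr := by ring
  have e1 : (0:ℝ) ≤ pr/rr := by positivity
  have e2 : (0:ℝ) ≤ pr/qr := by positivity
  rw [one_div_div, one_div_div,
    ENNReal.mul_rpow_of_nonneg _ _ e1, ENNReal.mul_rpow_of_nonneg _ _ e1,
    ENNReal.mul_rpow_of_nonneg _ _ e2, ENNReal.mul_rpow_of_nonneg _ _ e2,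
    ← ENNReal.rpow_mul C1, ← ENNReal.rpow_mul X, ← ENNReal.rpow_mul C2, ← ENNReal.rpow_mul Y,
    h1, h2,
    ENNReal.mul_rpow_of_nonneg _ _ hpr.le, ENNReal.mul_rpow_of_nonneg _ _ hpr.le,
    ENNReal.mul_rpow_of_nonneg _ _ hpr.le, ENNReal.mul_rpow_of_nonneg _ _ hpr.le,
    ENNReal.mul_rpow_of_nonneg _ _ hpr.le,
    ← ENNReal.rpow_mul 2, ← ENNReal.rpow_mul 2, h3, h4]
  ring



/-- Hölder inequality for Lorentz quasinorms: if `1/P = 1/R + 1/Q` and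
`1/p = 1/r + 1/q`, then `‖fg‖_{P,p} ≤ C ‖f‖_{R,r} ‖g‖_{Q,q}` with a constant
depending only on the exponents. -/
theorem stmt5 (n : ℕ) (P Q R : ℝ) (p q r : ENNReal)
    (hP : 1 ≤ P) (hQ : 1 ≤ Q) (hR : 1 ≤ R)
    (hp : 1 ≤ p) (hq : 1 ≤ q) (hr : 1 ≤ r)
    (hPQR : 1 / P = 1 / R + 1 / Q) (hpqr : p⁻¹ = r⁻¹ + q⁻¹) :
    ∃ Cc : ENNReal, Cc ≠ ⊤ ∧ ∀ f g : (Fin n → ℝ) → ℝ,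
      lorentzNorm volume P p (fun x => f x * g x) ≤
        Cc * lorentzNorm volume R r f * lorentzNorm volume Q q g := by
  by_cases hptop : p = ⊤
  · subst hptop
    have h0 : (⊤:ENNReal)⁻¹ = 0 := ENNReal.inv_top
    rw [h0] at hpqr
    have hrq := add_eq_zero.mp hpqr.symm
    have hrtop : r = ⊤ := ENNReal.inv_eq_zero.mp hrq.1
    have hqtop : q = ⊤ := ENNReal.inv_eq_zero.mp hrq.2
    subst hrtop; subst hqtop
    refine ⟨ENNReal.ofReal ((2:ℝ) ^ (1/P)), ENNReal.ofReal_ne_top, ?_⟩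
    intro f g
    rw [lorentzNorm, if_pos rfl]
    apply iSup₂_le
    intro t ht
    rw [mem_Ioi] at ht
    have ht2 : (0:ℝ) < t/2 := by linarith
    have e1 : (t/2:ℝ)^(1/R) * (t/2)^(1/Q) = (t/2)^(1/P) := by
      rw [← Real.rpow_add ht2, ← hPQR]
    have e2 : t ^ (1/P) = (2:ℝ)^(1/P) * ((t/2)^(1/R) * (t/2)^(1/Q)) := by
      rw [e1, ← Real.mul_rpow (by norm_num) ht2.le]
      congr 1
      ring
    calc ENNReal.ofReal (t ^ (1/P)) * rearr volume (fun x => f x * g x) t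
        ≤ ENNReal.ofReal (t ^ (1/P)) * (rearr volume f (t/2) * rearr volume g (t/2)) := by
          gcongr
          exact rearr_mul_le f g ht.le
      _ = ENNReal.ofReal ((2:ℝ)^(1/P)) * (ENNReal.ofReal ((t/2) ^ (1/R)) * rearr volume f (t/2)) *
          (ENNReal.ofReal ((t/2) ^ (1/Q)) * rearr volume g (t/2)) := by
          rw [e2, ENNReal.ofReal_mul (by positivity), ENNReal.ofReal_mul (by positivity)]
          ring
      _ ≤ ENNReal.ofReal ((2:ℝ)^(1/P)) * lorentzNorm volume R ⊤ f * lorentzNorm volume Q ⊤ g := by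
          gcongr
          · exact le_lorentzNorm_top volume R f ht2
          · exact le_lorentzNorm_top volume Q g ht2
  · -- p finite
    have hp0 : p ≠ 0 := by rintro rfl; exact absurd hp (by simp)
    have hpr1 : (1:ℝ) ≤ p.toReal := by simpa using ENNReal.toReal_mono hptop hp
    have hpr0 : (0:ℝ) < p.toReal := lt_of_lt_of_le one_pos hpr1
    by_cases hrtop : r = ⊤
    · -- r = ⊤, so p = q
      have hinv : p⁻¹ = q⁻¹ := by rw [hpqr, hrtop, ENNReal.inv_top, zero_add]
      have hpq2 : q = p := by rw [← inv_inv q, ← hinv, inv_inv]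
      subst hpq2
      subst hrtop
      set c : ℝ := 1/Q - 1/q.toReal with hc
      refine ⟨ENNReal.ofReal ((2:ℝ)^(1/R)) * (2:ℝ≥0∞)^(1/q.toReal) * ENNReal.ofReal ((2:ℝ)^c),
        ENNReal.mul_ne_top (ENNReal.mul_ne_top ENNReal.ofReal_ne_top
          (ENNReal.rpow_ne_top_of_nonneg (by positivity) (by norm_num))) ENNReal.ofReal_ne_top,
        ?_⟩
      intro f g
      set Mf := lorentzNorm volume R ⊤ f with hMf
      set Ng := lorentzNorm volume Q q g with hNg
      set A := ENNReal.ofReal ((2:ℝ)^(1/R)) * Mf with hA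
      have main : (lorentzNorm volume P q (fun x => f x * g x))^q.toReal
          ≤ (ENNReal.ofReal ((2:ℝ)^(1/R)) * (2:ℝ≥0∞)^(1/q.toReal) * ENNReal.ofReal ((2:ℝ)^c)
              * Mf * Ng)^q.toReal := by
        rw [lorentzNorm_finite_pow volume P hptop hp0]
        have hmeas : Measurable fun t : ℝ =>
            (ENNReal.ofReal (t^c) * rearr volume g (t/2))^q.toReal :=
          ((measurable_id.pow_const c).ennreal_ofReal.mul (rearr_half_measurable g)).pow_const _
        calc ∫⁻ t in Ioi (0:ℝ), (ENNReal.ofReal (t ^ (1/P - 1/q.toReal)) *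
                rearr volume (fun x => f x * g x) t)^q.toReal
            ≤ ∫⁻ t in Ioi (0:ℝ),
                A^q.toReal * (ENNReal.ofReal (t^c) * rearr volume g (t/2))^q.toReal := by
              apply lintegral_mono_ae
              rw [ae_restrict_iff' measurableSet_Ioi]
              filter_upwards with t ht
              rw [mem_Ioi] at ht
              have ht2 : (0:ℝ) < t/2 := by linarith
              rw [← ENNReal.mul_rpow_of_nonneg _ _ hpr0.le]
              apply ENNReal.rpow_le_rpow _ hpr0.le
              have e2 : t ^ (1/P - 1/q.toReal) = ((2:ℝ)^(1/R) * (t/2)^(1/R)) * t^c := by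
                rw [← Real.mul_rpow (by norm_num) ht2.le]
                have h22 : (2:ℝ) * (t/2) = t := by ring
                rw [h22, ← Real.rpow_add ht, hc]
                congr 1
                rw [hPQR]
                ring
              calc ENNReal.ofReal (t ^ (1/P - 1/q.toReal)) *
                      rearr volume (fun x => f x * g x) t
                  ≤ ENNReal.ofReal (t ^ (1/P - 1/q.toReal)) *
                      (rearr volume f (t/2) * rearr volume g (t/2)) := by
                    gcongr
                    exact rearr_mul_le f g ht.le
                _ = (ENNReal.ofReal ((2:ℝ)^(1/R)) *
                      (ENNReal.ofReal ((t/2)^(1/R)) * rearr volume f (t/2))) *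
                      (ENNReal.ofReal (t^c) * rearr volume g (t/2)) := by
                    rw [e2, ENNReal.ofReal_mul (by positivity), ENNReal.ofReal_mul (by positivity)]
                    ring
                _ ≤ A * (ENNReal.ofReal (t^c) * rearr volume g (t/2)) := by
                    rw [hA]
                    gcongr
                    exact le_lorentzNorm_top volume R f ht2
          _ = A^q.toReal * ∫⁻ t in Ioi (0:ℝ),
                (ENNReal.ofReal (t^c) * rearr volume g (t/2))^q.toReal :=
              lintegral_const_mul _ hmeas
          _ = A^q.toReal * (2 * (ENNReal.ofReal ((2:ℝ)^c))^q.toReal * Ng^q.toReal) := by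
              rw [lint_half (rearr volume g) (rearr_measurable g) c q.toReal hpr0.le,
                lorentzNorm_finite_pow volume Q hptop hp0 g, ← hc]
          _ = (ENNReal.ofReal ((2:ℝ)^(1/R)) * (2:ℝ≥0∞)^(1/q.toReal) * ENNReal.ofReal ((2:ℝ)^c)
              * Mf * Ng)^q.toReal := by
              rw [hA, ENNReal.mul_rpow_of_nonneg _ _ hpr0.le,
                ENNReal.mul_rpow_of_nonneg _ _ hpr0.le, ENNReal.mul_rpow_of_nonneg _ _ hpr0.le,
                ENNReal.mul_rpow_of_nonneg _ _ hpr0.le, ENNReal.mul_rpow_of_nonneg _ _ hpr0.le,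
                ← ENNReal.rpow_mul, one_div_mul_cancel hpr0.ne', ENNReal.rpow_one]
              ring
      have hfin := ENNReal.rpow_le_rpow main (by positivity : (0:ℝ) ≤ 1/q.toReal)
      rwa [← ENNReal.rpow_mul, ← ENNReal.rpow_mul, mul_one_div_cancel hpr0.ne',
        ENNReal.rpow_one, ENNReal.rpow_one] at hfin
    · -- r ≠ ⊤
      by_cases hqtop : q = ⊤
      · -- q = ⊤, so p = r
        have hinv : p⁻¹ = r⁻¹ := by rw [hpqr, hqtop, ENNReal.inv_top, add_zero]
        have hpq2 : p = r := by rw [← inv_inv p, hinv, inv_inv]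
        subst hpq2
        subst hqtop
        set c : ℝ := 1/R - 1/p.toReal with hc
        refine ⟨ENNReal.ofReal ((2:ℝ)^(1/Q)) * (2:ℝ≥0∞)^(1/p.toReal) * ENNReal.ofReal ((2:ℝ)^c),
          ENNReal.mul_ne_top (ENNReal.mul_ne_top ENNReal.ofReal_ne_top
            (ENNReal.rpow_ne_top_of_nonneg (by positivity) (by norm_num))) ENNReal.ofReal_ne_top,
          ?_⟩
        intro f g
        set Mg := lorentzNorm volume Q ⊤ g with hMg
        set Nf := lorentzNorm volume R p f with hNf
        set A := ENNReal.ofReal ((2:ℝ)^(1/Q)) * Mg with hA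
        have main : (lorentzNorm volume P p (fun x => f x * g x))^p.toReal
            ≤ (ENNReal.ofReal ((2:ℝ)^(1/Q)) * (2:ℝ≥0∞)^(1/p.toReal) * ENNReal.ofReal ((2:ℝ)^c)
                * Nf * Mg)^p.toReal := by
          rw [lorentzNorm_finite_pow volume P hptop hp0]
          have hmeas : Measurable fun t : ℝ =>
              (ENNReal.ofReal (t^c) * rearr volume f (t/2))^p.toReal :=
            ((measurable_id.pow_const c).ennreal_ofReal.mul (rearr_half_measurable f)).pow_const _
          calc ∫⁻ t in Ioi (0:ℝ), (ENNReal.ofReal (t ^ (1/P - 1/p.toReal)) *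
                  rearr volume (fun x => f x * g x) t)^p.toReal
              ≤ ∫⁻ t in Ioi (0:ℝ),
                  A^p.toReal * (ENNReal.ofReal (t^c) * rearr volume f (t/2))^p.toReal := by
                apply lintegral_mono_ae
                rw [ae_restrict_iff' measurableSet_Ioi]
                filter_upwards with t ht
                rw [mem_Ioi] at ht
                have ht2 : (0:ℝ) < t/2 := by linarith
                rw [← ENNReal.mul_rpow_of_nonneg _ _ hpr0.le]
                apply ENNReal.rpow_le_rpow _ hpr0.le
                have e2 : t ^ (1/P - 1/p.toReal) = t^c * ((2:ℝ)^(1/Q) * (t/2)^(1/Q)) := by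
                  rw [← Real.mul_rpow (by norm_num) ht2.le]
                  have h22 : (2:ℝ) * (t/2) = t := by ring
                  rw [h22, ← Real.rpow_add ht, hc]
                  congr 1
                  rw [hPQR]
                  ring
                calc ENNReal.ofReal (t ^ (1/P - 1/p.toReal)) *
                        rearr volume (fun x => f x * g x) t
                    ≤ ENNReal.ofReal (t ^ (1/P - 1/p.toReal)) *
                        (rearr volume f (t/2) * rearr volume g (t/2)) := by
                      gcongr
                      exact rearr_mul_le f g ht.le
                  _ = (ENNReal.ofReal ((2:ℝ)^(1/Q)) *
                        (ENNReal.ofReal ((t/2)^(1/Q)) * rearr volume g (t/2))) *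
                        (ENNReal.ofReal (t^c) * rearr volume f (t/2)) := by
                      rw [e2, ENNReal.ofReal_mul (Real.rpow_nonneg ht.le _),
                        ENNReal.ofReal_mul (by positivity)]
                      ring
                  _ ≤ A * (ENNReal.ofReal (t^c) * rearr volume f (t/2)) := by
                      rw [hA]
                      gcongr
                      exact le_lorentzNorm_top volume Q g ht2
            _ = A^p.toReal * ∫⁻ t in Ioi (0:ℝ),
                  (ENNReal.ofReal (t^c) * rearr volume f (t/2))^p.toReal :=
                lintegral_const_mul _ hmeas
            _ = A^p.toReal * (2 * (ENNReal.ofReal ((2:ℝ)^c))^p.toReal * Nf^p.toReal) := by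
                rw [lint_half (rearr volume f) (rearr_measurable f) c p.toReal hpr0.le,
                  lorentzNorm_finite_pow volume R hptop hp0 f, ← hc]
            _ = (ENNReal.ofReal ((2:ℝ)^(1/Q)) * (2:ℝ≥0∞)^(1/p.toReal) * ENNReal.ofReal ((2:ℝ)^c)
                * Nf * Mg)^p.toReal := by
                rw [hA, ENNReal.mul_rpow_of_nonneg _ _ hpr0.le,
                  ENNReal.mul_rpow_of_nonneg _ _ hpr0.le, ENNReal.mul_rpow_of_nonneg _ _ hpr0.le,
                  ENNReal.mul_rpow_of_nonneg _ _ hpr0.le, ENNReal.mul_rpow_of_nonneg _ _ hpr0.le,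
                  ← ENNReal.rpow_mul, one_div_mul_cancel hpr0.ne', ENNReal.rpow_one]
                ring
        have hfin := ENNReal.rpow_le_rpow main (by positivity : (0:ℝ) ≤ 1/p.toReal)
        rwa [← ENNReal.rpow_mul, ← ENNReal.rpow_mul, mul_one_div_cancel hpr0.ne',
          ENNReal.rpow_one, ENNReal.rpow_one] at hfin
      · -- r, q both finite : genuine Hölder case
        have hr0 : r ≠ 0 := by rintro rfl; exact absurd hr (by simp)
        have hq0 : q ≠ 0 := by rintro rfl; exact absurd hq (by simp)
        have hrr1 : (1:ℝ) ≤ r.toReal := by simpa using ENNReal.toReal_mono hrtop hr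
        have hqr1 : (1:ℝ) ≤ q.toReal := by simpa using ENNReal.toReal_mono hqtop hq
        have hrr0 : (0:ℝ) < r.toReal := lt_of_lt_of_le one_pos hrr1
        have hqr0 : (0:ℝ) < q.toReal := lt_of_lt_of_le one_pos hqr1
        have hsum : 1/p.toReal = 1/r.toReal + 1/q.toReal := by
          have h1 : (p⁻¹).toReal = (r⁻¹ + q⁻¹).toReal := by rw [hpqr]
          rw [ENNReal.toReal_add (ENNReal.inv_ne_top.mpr hr0) (ENNReal.inv_ne_top.mpr hq0),
            ENNReal.toReal_inv, ENNReal.toReal_inv, ENNReal.toReal_inv] at h1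
          simpa [one_div] using h1
        have hplt : p.toReal < r.toReal := by
          have h3 := one_div_pos.mpr hqr0
          have h2 : 1/r.toReal < 1/p.toReal := by
            rw [hsum]; linarith
          exact lt_of_one_div_lt_one_div hrr0 h2
        have hconj : Real.HolderConjugate (r.toReal/p.toReal) (q.toReal/p.toReal) := by
          rw [Real.holderConjugate_iff]
          constructor
          · rw [lt_div_iff₀ hpr0, one_mul]; exact hplt
          · have h4 : p.toReal/r.toReal + p.toReal/q.toReal
                = p.toReal * (1/r.toReal + 1/q.toReal) := by ring
            rw [inv_div, inv_div, h4, ← hsum, mul_one_div, div_self hpr0.ne']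
        set a : ℝ := 1/R - 1/r.toReal with ha
        set b : ℝ := 1/Q - 1/q.toReal with hb
        refine ⟨(2:ℝ≥0∞)^(1/r.toReal) * ENNReal.ofReal ((2:ℝ)^a) *
          ((2:ℝ≥0∞)^(1/q.toReal) * ENNReal.ofReal ((2:ℝ)^b)),
          ENNReal.mul_ne_top
            (ENNReal.mul_ne_top (ENNReal.rpow_ne_top_of_nonneg (by positivity) (by norm_num))
              ENNReal.ofReal_ne_top)
            (ENNReal.mul_ne_top (ENNReal.rpow_ne_top_of_nonneg (by positivity) (by norm_num))
              ENNReal.ofReal_ne_top), ?_⟩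
        intro f g
        set Nf := lorentzNorm volume R r f with hNf
        set Ng := lorentzNorm volume Q q g with hNg
        have hFm : Measurable fun t : ℝ =>
            (ENNReal.ofReal (t^a) * rearr volume f (t/2)) ^ p.toReal :=
          ((measurable_id.pow_const a).ennreal_ofReal.mul (rearr_half_measurable f)).pow_const _
        have hGm : Measurable fun t : ℝ =>
            (ENNReal.ofReal (t^b) * rearr volume g (t/2)) ^ p.toReal :=
          ((measurable_id.pow_const b).ennreal_ofReal.mul (rearr_half_measurable g)).pow_const _
        have main : (lorentzNorm volume P p (fun x => f x * g x))^p.toReal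
            ≤ ((2:ℝ≥0∞)^(1/r.toReal) * ENNReal.ofReal ((2:ℝ)^a) *
                ((2:ℝ≥0∞)^(1/q.toReal) * ENNReal.ofReal ((2:ℝ)^b)) * Nf * Ng)^p.toReal := by
          rw [lorentzNorm_finite_pow volume P hptop hp0]
          have hold := ENNReal.lintegral_mul_le_Lp_mul_Lq (volume.restrict (Ioi (0:ℝ))) hconj
            hFm.aemeasurable hGm.aemeasurable
          simp only [Pi.mul_apply] at hold
          have hcan1 : p.toReal * (r.toReal/p.toReal) = r.toReal := by field_simp
          have hcan2 : p.toReal * (q.toReal/p.toReal) = q.toReal := by field_simp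
          simp_rw [← ENNReal.rpow_mul, hcan1, hcan2] at hold
          calc ∫⁻ t in Ioi (0:ℝ), (ENNReal.ofReal (t ^ (1/P - 1/p.toReal)) *
                  rearr volume (fun x => f x * g x) t)^p.toReal
              ≤ ∫⁻ t in Ioi (0:ℝ),
                  (ENNReal.ofReal (t^a) * rearr volume f (t/2)) ^ p.toReal *
                  (ENNReal.ofReal (t^b) * rearr volume g (t/2)) ^ p.toReal := by
                apply lintegral_mono_ae
                rw [ae_restrict_iff' measurableSet_Ioi]
                filter_upwards with t ht
                rw [mem_Ioi] at ht
                rw [← ENNReal.mul_rpow_of_nonneg _ _ hpr0.le]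
                apply ENNReal.rpow_le_rpow _ hpr0.le
                have e2 : t ^ (1/P - 1/p.toReal) = t^a * t^b := by
                  rw [← Real.rpow_add ht, ha, hb]
                  congr 1
                  rw [hPQR, hsum]
                  ring
                calc ENNReal.ofReal (t ^ (1/P - 1/p.toReal)) *
                        rearr volume (fun x => f x * g x) t
                    ≤ ENNReal.ofReal (t ^ (1/P - 1/p.toReal)) *
                        (rearr volume f (t/2) * rearr volume g (t/2)) := by
                      gcongr
                      exact rearr_mul_le f g ht.le
                  _ = (ENNReal.ofReal (t^a) * rearr volume f (t/2)) *
                      (ENNReal.ofReal (t^b) * rearr volume g (t/2)) := by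
                      rw [e2, ENNReal.ofReal_mul (Real.rpow_nonneg ht.le _)]
                      ring
            _ ≤ (∫⁻ t in Ioi (0:ℝ),
                  (ENNReal.ofReal (t^a) * rearr volume f (t/2)) ^ r.toReal) ^
                    (1/(r.toReal/p.toReal)) *
                (∫⁻ t in Ioi (0:ℝ),
                  (ENNReal.ofReal (t^b) * rearr volume g (t/2)) ^ q.toReal) ^
                    (1/(q.toReal/p.toReal)) := hold
            _ = (2 * (ENNReal.ofReal ((2:ℝ)^a))^r.toReal * Nf^r.toReal) ^
                    (1/(r.toReal/p.toReal)) *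
                (2 * (ENNReal.ofReal ((2:ℝ)^b))^q.toReal * Ng^q.toReal) ^
                    (1/(q.toReal/p.toReal)) := by
                rw [lint_half (rearr volume f) (rearr_measurable f) a r.toReal hrr0.le,
                  lint_half (rearr volume g) (rearr_measurable g) b q.toReal hqr0.le,
                  lorentzNorm_finite_pow volume R hrtop hr0 f,
                  lorentzNorm_finite_pow volume Q hqtop hq0 g, ← ha, ← hb]
            _ = ((2:ℝ≥0∞)^(1/r.toReal) * ENNReal.ofReal ((2:ℝ)^a) *
                ((2:ℝ≥0∞)^(1/q.toReal) * ENNReal.ofReal ((2:ℝ)^b)) * Nf * Ng)^p.toReal :=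
                holder_alg _ _ _ _ hpr0 hrr0 hqr0
        have hfin := ENNReal.rpow_le_rpow main (by positivity : (0:ℝ) ≤ 1/p.toReal)
        rwa [← ENNReal.rpow_mul, ← ENNReal.rpow_mul, mul_one_div_cancel hpr0.ne',
          ENNReal.rpow_one, ENNReal.rpow_one] at hfin
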